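/- arXiv:1706.08299 — 3 statements merged into one kernel-verified Lean document; each statement's English description precedes it below -/
import Mathlib

section
/- Fix 1 ≤ r ≤ n and set d = n − r. Let A ∈ ℚ[u_1,…,u_r] be homogeneous of degree d, push-invariant, and mantar-invariant (mantar(A) = A), and suppose B = swap(A) satisfies B(v_1,…,v_r) = (−1)^{r−1} B(v_r,…,v_1). Then neg(A) = A, i.e. A(−u_1,…,−u_r) = A(u_1,…,u_r); in particular, if d is odd then A = 0. -/
noncomputable section

open MvPolynomial

/-- polynomials in `r` commuting variables over `ℚ`. -/
abbrev MP (r : ℕ) := MvPolynomial (Fin r) ℚ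

/-- the variable substitution defining the push-operator:
`(push A)(u_1,…,u_r) = A(−u_1−⋯−u_r, u_1,…,u_{r−1})`. -/
def pushSub (r : ℕ) : Fin r → MP r := fun j =>
  if (j : ℕ) = 0 then -(∑ k : Fin r, X k)
  else X ⟨(j : ℕ) - 1, lt_of_le_of_lt (Nat.sub_le _ _) j.isLt⟩

/-- the variable substitution defining the swap:
`(swap A)(v_1,…,v_r) = A(v_r, v_{r−1}−v_r, …, v_1−v_2)`. -/
def swapSub (r : ℕ) : Fin r → MP r := fun j =>
  if h : (j : ℕ) = 0 then X ⟨r - 1, Nat.sub_lt j.pos one_pos⟩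
  else X ⟨r - 1 - (j : ℕ), lt_of_le_of_lt (Nat.sub_le _ _) (Nat.sub_lt j.pos one_pos)⟩ -
    X ⟨r - (j : ℕ), Nat.sub_lt j.pos (Nat.pos_of_ne_zero h)⟩

/-- `mantar(A)(u_1,…,u_r) = (−1)^{r−1} A(u_r,…,u_1)`. -/
def mantarP (r : ℕ) (A : MP r) : MP r :=
  ((-1 : MP r)) ^ (r - 1) * MvPolynomial.rename Fin.rev A

/-- `neg(A)(u_1,…,u_r) = A(−u_1,…,−u_r)`. -/
def negP (r : ℕ) (A : MP r) : MP r := MvPolynomial.aeval (fun j : Fin r => -X j) A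

/-- substitution `v_j ↦ u_j` for `j = 1`, `v_j ↦ u_j − u_{j−1}` otherwise. -/
def tSub (r : ℕ) : Fin r → MP r := fun j =>
  if (j : ℕ) = 0 then X j
  else X j - X ⟨(j : ℕ) - 1, lt_of_le_of_lt (Nat.sub_le _ _) j.isLt⟩

/-- substitution `v_j ↦ u_j − u_{j+1}` for `j < r`, `v_r ↦ u_r`. -/
def uSub (r : ℕ) : Fin r → MP r := fun j =>
  if h : (j : ℕ) = r - 1 then X j
  else X j - X ⟨(j : ℕ) + 1, by have := j.isLt; omega⟩

/-- substitution `u_j ↦ −u_{j+1}` for `j < r`, `u_r ↦ u_1 + ⋯ + u_r`. -/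
def sigSub (r : ℕ) : Fin r → MP r := fun j =>
  if h : (j : ℕ) = r - 1 then ∑ k : Fin r, X k
  else -X ⟨(j : ℕ) + 1, by have := j.isLt; omega⟩

/-- substitution `v_j ↦ u_1 + ⋯ + u_j`. -/
def sumSub (r : ℕ) : Fin r → MP r := fun j =>
  ∑ k ∈ Finset.univ.filter (fun k : Fin r => (k : ℕ) ≤ (j : ℕ)), X k

lemma X_congr {r : ℕ} {a b : Fin r} (h : (a : ℕ) = (b : ℕ)) : (X a : MP r) = X b := by
  congr 1; exact Fin.ext h

lemma val_mk {r a : ℕ} (h : a < r) : ((⟨a, h⟩ : Fin r) : ℕ) = a := rfl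

lemma val_rev_mk {r a : ℕ} (h : a < r) : (((⟨a, h⟩ : Fin r).rev : Fin r) : ℕ) = r - 1 - a := by
  have : (((⟨a, h⟩ : Fin r).rev : Fin r) : ℕ) = r - (a + 1) := rfl
  omega

lemma neg_homog {r d : ℕ} {A : MP r} (h : A.IsHomogeneous d) :
    negP r A = (-1 : MP r) ^ d * A := by
  rw [negP]
  conv_lhs => rw [A.as_sum]
  conv_rhs => rw [A.as_sum, Finset.mul_sum]
  rw [map_sum]
  refine Finset.sum_congr rfl fun v hv => ?_
  have hd : ∑ i ∈ v.support, v i = d := by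
    have := h (mem_support_iff.mp hv)
    simpa [Finsupp.weight_apply, Finsupp.sum] using this
  rw [aeval_monomial, monomial_eq]
  have hneg : ∀ i : Fin r, (-X i : MvPolynomial (Fin r) ℚ) = (-1) * X i := fun i => by ring
  simp_rw [hneg, mul_pow]
  rw [Finsupp.prod, Finset.prod_mul_distrib, Finset.prod_pow_eq_pow_sum, hd, algebraMap_eq]
  rw [Finsupp.prod]; ring

lemma sum_pushSub (m : ℕ) :
    ∑ k : Fin (m + 1), pushSub (m + 1) k = -X ⟨m, Nat.lt_succ_self m⟩ := by
  rw [Fin.sum_univ_succ]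
  have h0 : pushSub (m + 1) 0 = -(∑ k : Fin (m + 1), X k) := by simp [pushSub]
  have hs : ∀ k : Fin m, pushSub (m + 1) k.succ = X k.castSucc := by
    intro k
    simp only [pushSub]
    rw [if_neg (by simp [Fin.val_succ])]
    exact X_congr (by simp [Fin.val_succ])
  simp_rw [h0, hs]
  rw [Fin.sum_univ_castSucc (f := fun k : Fin (m+1) => (X k : MP (m+1)))]
  have : (Fin.last m) = (⟨m, Nat.lt_succ_self m⟩ : Fin (m+1)) := rfl
  rw [this]
  ring

lemma sumSub_step {m : ℕ} (j : Fin (m + 1)) (h : (j : ℕ) ≠ 0) :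
    sumSub (m + 1) j - sumSub (m + 1) ⟨(j : ℕ) - 1, by have := j.isLt; omega⟩ = X j := by
  have hset : Finset.univ.filter (fun k : Fin (m+1) => (k : ℕ) ≤ (j : ℕ)) =
      insert j (Finset.univ.filter (fun k : Fin (m+1) => (k : ℕ) ≤ (j : ℕ) - 1)) := by
    ext k
    simp only [Finset.mem_filter, Finset.mem_insert, Finset.mem_univ, true_and, Fin.ext_iff]
    omega
  rw [sumSub, sumSub, hset, Finset.sum_insert (by simp only [Finset.mem_filter, Finset.mem_univ, true_and]; omega)]
  ring

lemma sumSub_zero {m : ℕ} (j : Fin (m + 1)) (h : (j : ℕ) = 0) :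
    sumSub (m + 1) j = X j := by
  have hset : Finset.univ.filter (fun k : Fin (m+1) => (k : ℕ) ≤ (j : ℕ)) = {j} := by
    ext k
    simp only [Finset.mem_filter, Finset.mem_univ, true_and, Finset.mem_singleton, Fin.ext_iff]
    omega
  rw [sumSub, hset, Finset.sum_singleton]

lemma sumSub_last {m : ℕ} : sumSub (m + 1) ⟨m, Nat.lt_succ_self m⟩ = ∑ k : Fin (m+1), X k := by
  rw [sumSub]
  congr 1
  refine Finset.filter_true_of_mem fun k _ => ?_
  show (k : ℕ) ≤ m
  exact Nat.lt_succ_iff.mp k.isLt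

/-- Lemma 14 of the paper.  Fix `1 ≤ r ≤ n`, `d = n − r`.  If
`A ∈ ℚ[u_1,…,u_r]` is homogeneous of degree `d`, push-invariant and mantar-invariant, and
`B = swap(A)` satisfies `B(v_1,…,v_r) = (−1)^{r−1} B(v_r,…,v_1)`, then `neg(A) = A`; in
particular if `d` is odd then `A = 0`. -/
theorem neg_invariance_and_odd_vanishing (n r : ℕ) (hr : 1 ≤ r) (hrn : r ≤ n) (A : MP r)
    (hhom : A.IsHomogeneous (n - r))
    (hpush : MvPolynomial.aeval (pushSub r) A = A)
    (hmantar : mantarP r A = A)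
    (hB : mantarP r (MvPolynomial.aeval (swapSub r) A) = MvPolynomial.aeval (swapSub r) A) :
    negP r A = A ∧ (Odd (n - r) → A = 0) := by
  obtain ⟨m, rfl⟩ : ∃ m, r = m + 1 := ⟨r - 1, by omega⟩
  rw [mantarP, Nat.add_sub_cancel] at hmantar hB
  have hman : A = (-1 : MP (m+1)) ^ m * rename Fin.rev A := hmantar.symm
  have hTeq : (fun j : Fin (m+1) => rename Fin.rev (swapSub (m+1) j)) = tSub (m+1) := by
    funext j
    rcases eq_or_ne (j : ℕ) 0 with h | h
    · rw [swapSub]; rw [dif_pos h, rename_X, tSub]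
      rw [if_pos h]
      exact X_congr (by rw [val_rev_mk]; (try simp only [val_mk]); omega)
    · rw [swapSub]; rw [dif_neg h, map_sub, rename_X, rename_X, tSub]
      rw [if_neg h]
      have hj := j.isLt
      congr 1
      · exact X_congr (by rw [val_rev_mk]; (try simp only [val_mk]); omega)
      · exact X_congr (by rw [val_rev_mk]; (try simp only [val_mk]); omega)
  have hUeq : (fun j : Fin (m+1) => swapSub (m+1) (Fin.rev j)) = uSub (m+1) := by
    funext j
    have hj := j.isLt
    rcases eq_or_ne (j : ℕ) m with h | h
    · rw [swapSub]; rw [dif_pos (by rw [Fin.val_rev]; omega), uSub]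
      rw [dif_pos (by omega)]
      exact X_congr (by (try simp only [Fin.val_rev, val_mk]); omega)
    · rw [swapSub]; rw [dif_neg (by rw [Fin.val_rev]; omega), uSub]
      rw [dif_neg (by omega)]
      congr 1
      · exact X_congr (by (try simp only [Fin.val_rev, val_mk]); omega)
      · exact X_congr (by (try simp only [Fin.val_rev, val_mk]); omega)
  -- from hB and mantar-invariance : aeval tSub A = aeval uSub A
  have key1 : MvPolynomial.aeval (tSub (m+1)) A = MvPolynomial.aeval (uSub (m+1)) A := by
    have hne : ((-1 : MP (m+1)) ^ m) ≠ 0 := pow_ne_zero _ (neg_ne_zero.mpr one_ne_zero)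
    refine mul_left_cancel₀ hne ?_
    have e1 : (rename Fin.rev (MvPolynomial.aeval (swapSub (m+1)) A) : MP (m+1))
        = MvPolynomial.aeval (tSub (m+1)) A := by
      rw [comp_aeval_apply, hTeq]
    have e2 : MvPolynomial.aeval (swapSub (m+1)) A
        = (-1 : MP (m+1)) ^ m * MvPolynomial.aeval (uSub (m+1)) A := by
      conv_lhs => rw [hman]
      rw [map_mul, aeval_rename]
      congr 1
      · simp
      · rw [← hUeq]; rfl
    rw [e1] at hB
    rw [hB, e2]
  -- compose with sumSub : A = aeval sigSub A
  have key2 : A = MvPolynomial.aeval (sigSub (m+1)) A := by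
    have hcomp := congrArg (MvPolynomial.aeval (sumSub (m+1))) key1
    rw [comp_aeval_apply, comp_aeval_apply] at hcomp
    have hTs : (fun j : Fin (m+1) => MvPolynomial.aeval (sumSub (m+1)) (tSub (m+1) j))
        = fun j : Fin (m+1) => (X j : MP (m+1)) := by
      funext j
      rcases eq_or_ne (j : ℕ) 0 with h | h
      · rw [tSub]; rw [if_pos h, aeval_X]
        exact sumSub_zero j h
      · rw [tSub]; rw [if_neg h, map_sub, aeval_X, aeval_X]
        exact sumSub_step j h
    have hUs : (fun j : Fin (m+1) => MvPolynomial.aeval (sumSub (m+1)) (uSub (m+1) j))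
        = sigSub (m+1) := by
      funext j
      have hj := j.isLt
      rcases eq_or_ne (j : ℕ) m with h | h
      · rw [uSub]; rw [dif_pos (by omega), aeval_X, sigSub]
        rw [dif_pos (by omega)]
        rw [show j = (⟨m, Nat.lt_succ_self m⟩ : Fin (m+1)) from Fin.ext h]
        exact sumSub_last
      · rw [uSub]; rw [dif_neg (by omega), map_sub, aeval_X, aeval_X, sigSub]
        rw [dif_neg (by omega)]
        have hstep := sumSub_step (⟨(j : ℕ) + 1, by omega⟩ : Fin (m+1)) (by simp)
        rw [show (⟨(((⟨(j:ℕ)+1, by omega⟩ : Fin (m+1)) : ℕ)) - 1, by omega⟩ : Fin (m+1)) = j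
          from Fin.ext (by simp)] at hstep
        linear_combination -hstep
    rw [hTs, hUs, aeval_X_left_apply] at hcomp
    exact hcomp
  -- neg-invariance
  have hnegmap : (fun j : Fin (m+1) => MvPolynomial.aeval (pushSub (m+1)) (sigSub (m+1) j))
      = fun j : Fin (m+1) => (-X j : MP (m+1)) := by
    funext j
    have hj := j.isLt
    rcases eq_or_ne (j : ℕ) m with h | h
    · rw [sigSub]; rw [dif_pos (by omega), map_sum]
      simp_rw [aeval_X]
      rw [sum_pushSub]
      rw [show (⟨m, Nat.lt_succ_self m⟩ : Fin (m+1)) = j from Fin.ext h.symm]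
    · rw [sigSub]; rw [dif_neg (by omega), map_neg, aeval_X, pushSub]
      rw [if_neg (by simp)]
      refine congrArg Neg.neg (X_congr ?_)
      (try simp only [val_mk]); omega
  have hnegA : negP (m+1) A = A := by
    rw [negP, ← hnegmap, ← comp_aeval_apply, ← key2, hpush]
  refine ⟨hnegA, fun hodd => ?_⟩
  have hsc := neg_homog hhom
  rw [hnegA, hodd.neg_one_pow] at hsc
  have h2 : (2 : MP (m+1)) * A = 0 := by linear_combination hsc
  rcases mul_eq_zero.mp h2 with h | h
  · exact absurd h two_ne_zero
  · exact h
end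
end

section
/- Let b, b′ ∈ lie_C be push-invariant, with (unique) partners a, a′ ∈ lie_C, i.e. the derivations D_{b,a} and D_{b′,a′} annihilate [x,y]. Then the commutator [D_{b,a}, D_{b′,a′}] also annihilates [x,y] and equals D_{b″,a″} with b″ = D_{b,a}(b′) − D_{b′,a′}(b) and a″ = D_{b,a}(a′) − D_{b′,a′}(a); in particular ⟨b,b′⟩ := D_{b,a}(b′) − D_{b′,a′}(b) is again a push-invariant element of lie_C, with partner a″. Hence the push-invariant elements of lie_C form a Lie algebra under the bracket ⟨·,·⟩, isomorphic via b ↦ D_{b,a} to the Lie algebra oder_2 of derivations of lie_2 annihilating [x,y] (and whose values on x, y have no linear term in x). -/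
noncomputable section

attribute [instance] LieRing.ofAssociativeRing

abbrev Ass2 : Type := MonoidAlgebra ℚ (FreeMonoid (Fin 2))

def mono (w : List (Fin 2)) : Ass2 := MonoidAlgebra.single (FreeMonoid.ofList w) 1

def Xg : Ass2 := mono [0]
def Yg : Ass2 := mono [1]

def coeffW (f : Ass2) (w : List (Fin 2)) : ℚ :=
  f.coeff (FreeMonoid.ofList w)

def suppW (f : Ass2) : Finset (FreeMonoid (Fin 2)) :=
  f.coeff.support

def pushWord (w : List (Fin 2)) : List (Fin 2) :=
  if (1 : Fin 2) ∈ w then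
    (w.reverse.takeWhile (· ≠ 1)).reverse ++ [1] ++ ((w.reverse.dropWhile (· ≠ 1)).tail).reverse
  else w

def pushA (f : Ass2) : Ass2 :=
  MonoidAlgebra.ofCoeff (Finsupp.mapDomain (fun w => FreeMonoid.ofList (pushWord (FreeMonoid.toList w)))
    f.coeff)

def depthPart (r : ℕ) (f : Ass2) : Ass2 :=
  MonoidAlgebra.ofCoeff (Finsupp.filter (fun w => (FreeMonoid.toList w).count 1 = r) f.coeff)

def homogW (n : ℕ) (f : Ass2) : Prop := ∀ w ∈ suppW f, (FreeMonoid.toList w).length = n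

def lie2 : LieSubalgebra ℚ Ass2 := LieSubalgebra.lieSpan ℚ Ass2 {Xg, Yg}

def Cgen : ℕ → Ass2
  | 0 => Yg
  | i + 1 => ⁅Xg, Cgen i⁆

def lieC : LieSubalgebra ℚ Ass2 := LieSubalgebra.lieSpan ℚ Ass2 (Set.range Cgen)

/-- `rY f` is `f_y` : the part of `f` consisting of words ending in `y`, with that `y` removed. -/
def rY (f : Ass2) : Ass2 :=
  MonoidAlgebra.ofCoeff (Finsupp.comapDomain (fun w => w * FreeMonoid.of 1) f.coeff
    (Set.injOn_of_injective (mul_left_injective (FreeMonoid.of 1))))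

def rX (f : Ass2) : Ass2 :=
  MonoidAlgebra.ofCoeff (Finsupp.comapDomain (fun w => w * FreeMonoid.of 0) f.coeff
    (Set.injOn_of_injective (mul_left_injective (FreeMonoid.of 0))))

/-- `lY f` is `f^y`. -/
def lY (f : Ass2) : Ass2 :=
  MonoidAlgebra.ofCoeff (Finsupp.comapDomain (fun w => FreeMonoid.of 1 * w) f.coeff
    (Set.injOn_of_injective (mul_right_injective (FreeMonoid.of 1))))

def lX (f : Ass2) : Ass2 :=
  MonoidAlgebra.ofCoeff (Finsupp.comapDomain (fun w => FreeMonoid.of 0 * w) f.coeff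
    (Set.injOn_of_injective (mul_right_injective (FreeMonoid.of 0))))

/-- sum of all monomials of weight `n` and depth `r` -/
def allMon (n r : ℕ) : Ass2 :=
  ∑ g ∈ Finset.univ.filter (fun g : Fin n → Fin 2 => (List.ofFn g).count 1 = r),
    mono (List.ofFn g)

def PushNeutral (p : Ass2) : Prop :=
  ∀ r : ℕ, 1 ≤ r → ∑ i ∈ Finset.range (r + 1), pushA^[i] (depthPart r p) = 0

def CircNeutral (b : Ass2) : Prop :=
  ∀ r : ℕ, 1 < r → ∑ i ∈ Finset.range (r + 1), pushA^[i] (depthPart r (lY b)) = 0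

def PushConstant (p : Ass2) (n : ℕ) (c : ℚ) : Prop :=
  coeffW p (List.replicate n 1) = 0 ∧
    ∀ r : ℕ, 1 < r → r < n →
      ∑ i ∈ Finset.range (r + 1), pushA^[i] (depthPart r p) = c • allMon n r

def cycSub : Submodule ℚ Ass2 :=
  Submodule.span ℚ {p : Ass2 | ∃ (w : List (Fin 2)) (k : ℕ), p = mono w - mono (w.rotate k)}

abbrev Tr2 := Ass2 ⧸ cycSub

def trQ : Ass2 →ₗ[ℚ] Tr2 := cycSub.mkQ

def derFun (vx vy : Ass2) : List (Fin 2) → Ass2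
  | [] => 0
  | a :: w => (if a = 0 then vx else vy) * mono w + mono [a] * derFun vx vy w

/-- the derivation of `Ass2` with `x ↦ vx`, `y ↦ vy`, applied to `f`. -/
def der (vx vy : Ass2) (f : Ass2) : Ass2 :=
  Finsupp.sum f.coeff (fun w c => c • derFun vx vy (FreeMonoid.toList w))

/-- the tangential derivation `E_{a,b}` with `x ↦ [x,a]`, `y ↦ [y,b]`. -/
def Eder (a b : Ass2) : Ass2 → Ass2 := der ⁅Xg, a⁆ ⁅Yg, b⁆

end

noncomputable section Aux

-- linear map version
def derL (vx vy : Ass2) : Ass2 →ₗ[ℚ] Ass2 :=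
  Finsupp.lsum ℚ (fun w => LinearMap.toSpanSingleton ℚ Ass2 (derFun vx vy (FreeMonoid.toList w)))
    ∘ₗ (MonoidAlgebra.coeffLinearEquiv ℚ).toLinearMap

lemma der_eq (vx vy f : Ass2) : der vx vy f = derL vx vy f := rfl

lemma mono_mul (w v : List (Fin 2)) : mono w * mono v = mono (w ++ v) := by
  simp [mono, MonoidAlgebra.single_mul_single, FreeMonoid.ofList_append]

lemma der_mono (vx vy : Ass2) (w : List (Fin 2)) :
    der vx vy (mono w) = derFun vx vy w := by
  unfold der mono
  rw [MonoidAlgebra.coeff_single, Finsupp.sum_single_index] <;> simp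

lemma der_add (vx vy f g : Ass2) : der vx vy (f + g) = der vx vy f + der vx vy g := by
  simp [der_eq, map_add]

lemma der_smul (vx vy : Ass2) (c : ℚ) (f : Ass2) : der vx vy (c • f) = c • der vx vy f := by
  simp [der_eq, map_smul]

lemma der_zero (vx vy : Ass2) : der vx vy 0 = 0 := by simp [der_eq, map_zero]

lemma single_eq_smul_mono (w : FreeMonoid (Fin 2)) (c : ℚ) :
    (MonoidAlgebra.single w c : Ass2) = c • mono (FreeMonoid.toList w) := by
  simp only [mono, MonoidAlgebra.single, Finsupp.smul_single, smul_eq_mul, mul_one,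
    FreeMonoid.ofList_toList]
  simp [Finsupp.smul_single]

lemma derFun_append (vx vy : Ass2) (w v : List (Fin 2)) :
    derFun vx vy (w ++ v) = derFun vx vy w * mono v + mono w * derFun vx vy v := by
  induction w with
  | nil =>
      have h1 : mono ([] : List (Fin 2)) = 1 := rfl
      simp [derFun, h1]
  | cons a w ih =>
      simp only [List.cons_append, List.append_eq, derFun, ih, mul_add, add_mul, mul_assoc]
      have h : mono [a] * (mono w * derFun vx vy v) = mono (a :: w) * derFun vx vy v := by
        rw [← mul_assoc, mono_mul]; rfl
      rw [h, mono_mul]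
      abel

lemma der_mul (vx vy f g : Ass2) :
    der vx vy (f * g) = der vx vy f * g + f * der vx vy g := by
  induction f using MonoidAlgebra.induction_linear with
  | zero => simp [der_zero]
  | add p q hp hq => rw [add_mul, der_add, hp, hq, der_add]; noncomm_ring
  | single w c =>
      induction g using MonoidAlgebra.induction_linear with
      | zero => simp [der_zero]
      | add p q hp hq => rw [mul_add, der_add, hp, hq, der_add]; noncomm_ring
      | single v d =>
          rw [single_eq_smul_mono, single_eq_smul_mono]
          rw [smul_mul_smul_comm, der_smul, der_smul, der_smul, mono_mul,
            der_mono, der_mono, der_mono, derFun_append]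
          simp [smul_add, mul_smul_comm, smul_mul_assoc, mul_smul]
          module

lemma der_one (vx vy : Ass2) : der vx vy 1 = 0 := by
  have : (1 : Ass2) = mono [] := rfl
  rw [this, der_mono]; rfl

lemma der_comm_mono (b a b' a' : Ass2) (t : List (Fin 2)) :
    der b a (der b' a' (mono t)) - der b' a' (der b a (mono t))
      = der (der b a b' - der b' a' b) (der b a a' - der b' a' a) (mono t) := by
  induction t with
  | nil =>
      have : mono ([] : List (Fin 2)) = 1 := rfl
      simp [this, der_one, der_zero]
  | cons x t ih =>
      have hsplit : mono (x :: t) = mono [x] * mono t := by rw [mono_mul]; rfl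
      have hx : ∀ u v : Ass2, der u v (mono [x]) = (if x = 0 then u else v) := by
        intro u v
        rw [der_mono]
        show (if x = 0 then u else v) * mono [] + mono [x] * 0 = _
        have : mono ([] : List (Fin 2)) = 1 := rfl
        simp [this]
      rw [hsplit]
      simp only [der_mul, hx]
      rw [← ih]
      simp only [der_mul, der_add, hx, mul_add, add_mul, sub_mul, mul_sub]
      split_ifs <;> simp only [add_mul, sub_mul] <;> abel

lemma der_comm (b a b' a' : Ass2) (f : Ass2) :
    der b a (der b' a' f) - der b' a' (der b a f)
      = der (der b a b' - der b' a' b) (der b a a' - der b' a' a) f := by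
  induction f using MonoidAlgebra.induction_on with
  | of g => exact der_comm_mono b a b' a' (FreeMonoid.toList g)
  | add f g hf hg => simp only [der_add]; rw [← hf, ← hg]; abel
  | smul r f hf => simp only [der_smul]; rw [← hf]; simp [smul_sub]

lemma der_lie (vx vy f g : Ass2) :
    der vx vy ⁅f, g⁆ = ⁅der vx vy f, g⁆ + ⁅f, der vx vy g⁆ := by
  simp only [Ring.lie_def]
  rw [show f * g - g * f = f * g - g * f from rfl]
  rw [show der vx vy (f * g - g * f) = der vx vy (f*g) - der vx vy (g*f) from by
    rw [sub_eq_add_neg, ← neg_one_smul ℚ (g*f), der_add, der_smul]; simp [sub_eq_add_neg]]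
  rw [der_mul, der_mul]
  abel




lemma Cgen_mem (i : ℕ) : Cgen i ∈ lieC := LieSubalgebra.subset_lieSpan ⟨i, rfl⟩

lemma adX_mem {z : Ass2} (hz : z ∈ lieC) : ⁅Xg, z⁆ ∈ lieC := by
  suffices h : z ∈ lieC ∧ ⁅Xg, z⁆ ∈ lieC from h.2
  refine LieSubalgebra.lieSpan_induction ℚ (s := Set.range Cgen)
    (p := fun x _ => x ∈ lieC ∧ ⁅Xg, x⁆ ∈ lieC) ?_ ?_ ?_ ?_ ?_ hz
  · rintro x ⟨i, rfl⟩
    exact ⟨Cgen_mem i, Cgen_mem (i + 1)⟩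
  · simp [lieC.zero_mem]
  · rintro x y _ _ ⟨h1, h2⟩ ⟨h3, h4⟩
    exact ⟨lieC.add_mem h1 h3, by rw [lie_add]; exact lieC.add_mem h2 h4⟩
  · rintro r x _ ⟨h1, h2⟩
    exact ⟨lieC.smul_mem r h1, by rw [lie_smul]; exact lieC.smul_mem r h2⟩
  · rintro x y _ _ ⟨h1, h2⟩ ⟨h3, h4⟩
    exact ⟨lieC.lie_mem h1 h3, by
      rw [leibniz_lie]
      exact lieC.add_mem (lieC.lie_mem h2 h3) (lieC.lie_mem h1 h4)⟩

lemma der_Xg (b a : Ass2) : der b a Xg = b := by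
  show der b a (mono [0]) = b
  rw [der_mono]
  show (if (0 : Fin 2) = 0 then b else a) * mono [] + mono [0] * 0 = b
  have : mono ([] : List (Fin 2)) = 1 := rfl
  simp [this]

lemma der_Yg (b a : Ass2) : der b a Yg = a := by
  show der b a (mono [1]) = a
  rw [der_mono]
  show (if (1 : Fin 2) = 0 then b else a) * mono [] + mono [1] * 0 = a
  have : mono ([] : List (Fin 2)) = 1 := rfl
  simp [this]

lemma der_Cgen {b a : Ass2} (hb : b ∈ lieC) (ha : a ∈ lieC) (i : ℕ) :
    der b a (Cgen i) ∈ lieC := by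
  induction i with
  | zero => rw [show Cgen 0 = Yg from rfl, der_Yg]; exact ha
  | succ i ih =>
      rw [show Cgen (i + 1) = ⁅Xg, Cgen i⁆ from rfl, der_lie, der_Xg]
      exact lieC.add_mem (lieC.lie_mem hb (Cgen_mem i)) (adX_mem ih)

lemma der_mem_lieC {b a : Ass2} (hb : b ∈ lieC) (ha : a ∈ lieC) {z : Ass2}
    (hz : z ∈ lieC) : der b a z ∈ lieC := by
  suffices h : z ∈ lieC ∧ der b a z ∈ lieC from h.2
  refine LieSubalgebra.lieSpan_induction ℚ (s := Set.range Cgen)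
    (p := fun x _ => x ∈ lieC ∧ der b a x ∈ lieC) ?_ ?_ ?_ ?_ ?_ hz
  · rintro x ⟨i, rfl⟩
    exact ⟨Cgen_mem i, der_Cgen hb ha i⟩
  · simp [lieC.zero_mem, der_zero]
  · rintro x y _ _ ⟨h1, h2⟩ ⟨h3, h4⟩
    exact ⟨lieC.add_mem h1 h3, by rw [der_add]; exact lieC.add_mem h2 h4⟩
  · rintro r x _ ⟨h1, h2⟩
    exact ⟨lieC.smul_mem r h1, by rw [der_smul]; exact lieC.smul_mem r h2⟩
  · rintro x y _ _ ⟨h1, h2⟩ ⟨h3, h4⟩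
    refine ⟨lieC.lie_mem h1 h3, ?_⟩
    rw [der_lie]
    exact lieC.add_mem (lieC.lie_mem h2 h3) (lieC.lie_mem h1 h4)

lemma coeffW_add (f g : Ass2) (w : List (Fin 2)) :
    coeffW (f + g) w = coeffW f w + coeffW g w := by simp [coeffW]

lemma coeffW_sub (f g : Ass2) (w : List (Fin 2)) :
    coeffW (f - g) w = coeffW f w - coeffW g w := by simp [coeffW]

lemma coeffW_zero (w : List (Fin 2)) : coeffW 0 w = 0 := by simp [coeffW]

lemma mulR_apply (B : Ass2) (c : Fin 2) (u : List (Fin 2)) :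
    coeffW (B * mono [c]) (u ++ [c]) = coeffW B u := by
  unfold coeffW mono
  have H : ∀ a : FreeMonoid (Fin 2),
      a * FreeMonoid.ofList [c] = FreeMonoid.ofList (u ++ [c]) ↔ a = FreeMonoid.ofList u := by
    intro a
    constructor
    · intro h
      have h2 : FreeMonoid.toList a ++ [c] = u ++ [c] := congrArg FreeMonoid.toList h
      have h3 := List.append_cancel_right h2
      have := congrArg FreeMonoid.ofList h3
      rwa [FreeMonoid.ofList_toList] at this
    · rintro rfl; rfl
  have := MonoidAlgebra.coeff_mul_single_eq_coeff_mul (x := B) (r := (1:ℚ)) _ (fun a _ => H a)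
  rw [this, mul_one]

lemma mulR_apply_ne (B : Ass2) (c : Fin 2) (u : List (Fin 2)) (h : u.getLast? ≠ some c) :
    coeffW (B * mono [c]) u = 0 := by
  unfold coeffW mono
  apply MonoidAlgebra.mul_single_apply_of_not_exists_mul
  rintro ⟨d, hd⟩
  apply h
  have h2 : u = FreeMonoid.toList d ++ [c] := congrArg FreeMonoid.toList hd
  rw [h2, List.getLast?_concat]

lemma mulL_apply (c : Fin 2) (B : Ass2) (u : List (Fin 2)) :
    coeffW (mono [c] * B) (c :: u) = coeffW B u := by
  unfold coeffW mono
  have H : ∀ a : FreeMonoid (Fin 2),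
      FreeMonoid.ofList [c] * a = FreeMonoid.ofList (c :: u) ↔ a = FreeMonoid.ofList u := by
    intro a
    constructor
    · intro h
      have h2 : c :: FreeMonoid.toList a = c :: u := congrArg FreeMonoid.toList h
      have h3 := List.cons_injective h2
      have := congrArg FreeMonoid.ofList h3
      rwa [FreeMonoid.ofList_toList] at this
    · rintro rfl; rfl
  have := MonoidAlgebra.coeff_single_mul_eq_mul_coeff (x := B) (r := (1:ℚ)) _ (fun a _ => H a)
  rw [this, one_mul]

lemma mulL_apply_ne (c : Fin 2) (B : Ass2) (u : List (Fin 2)) (h : u.head? ≠ some c) :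
    coeffW (mono [c] * B) u = 0 := by
  unfold coeffW mono
  apply MonoidAlgebra.single_mul_apply_of_not_exists_mul
  rintro ⟨d, hd⟩
  apply h
  have h2 : u = c :: FreeMonoid.toList d := congrArg FreeMonoid.toList hd
  rw [h2, List.head?_cons]

section Lists
variable {w s t : List (Fin 2)}

def popWord (w : List (Fin 2)) : List (Fin 2) :=
  if (1 : Fin 2) ∈ w then
    ((w.dropWhile (· ≠ 1)).tail) ++ [1] ++ w.takeWhile (· ≠ 1)
  else w

lemma fin2_eq_zero {x : Fin 2} (h : x ≠ 1) : x = 0 := by omega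

lemma tw_dw (t s : List (Fin 2)) (ht : (1:Fin 2) ∉ t) :
    (t ++ 1 :: s).takeWhile (· ≠ 1) = t ∧ (t ++ 1 :: s).dropWhile (· ≠ 1) = 1 :: s := by
  induction t with
  | nil => simp [List.takeWhile, List.dropWhile]
  | cons a t ih =>
      have ha : a ≠ 1 := fun h => ht (h ▸ List.mem_cons_self (a := a) (l := t))
      have this2 := ih (fun h => ht (List.mem_cons_of_mem a h))
      have hpa : decide (a ≠ (1:Fin 2)) = true := by simpa using ha
      simp only [List.cons_append, List.takeWhile_cons, List.dropWhile_cons, hpa, if_true,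
        this2.1, this2.2]
      exact ⟨trivial, trivial⟩

lemma push_append (s t : List (Fin 2)) (ht : (1:Fin 2) ∉ t) :
    pushWord (s ++ 1 :: t) = t ++ 1 :: s := by
  have hmem : (1:Fin 2) ∈ s ++ 1 :: t := by simp
  have hrev : (s ++ 1 :: t).reverse = t.reverse ++ 1 :: s.reverse := by simp
  have htr : (1:Fin 2) ∉ t.reverse := by simpa using ht
  have h := tw_dw t.reverse s.reverse htr
  rw [pushWord, if_pos hmem, hrev, h.1, h.2]
  simp

lemma pop_append (s t : List (Fin 2)) (hs : (1:Fin 2) ∉ s) :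
    popWord (s ++ 1 :: t) = t ++ 1 :: s := by
  have hmem : (1:Fin 2) ∈ s ++ 1 :: t := by simp
  have h := tw_dw s t hs
  rw [popWord, if_pos hmem, h.1, h.2]
  simp

lemma decomp_first (h : (1:Fin 2) ∈ w) : ∃ t v : List (Fin 2), (1:Fin 2) ∉ t ∧ w = t ++ 1 :: v := by
  refine ⟨w.takeWhile (· ≠ 1), (w.dropWhile (· ≠ 1)).tail, ?_, ?_⟩
  · intro hm
    have := List.mem_takeWhile_imp hm
    simp at this
  · have hd : w.dropWhile (· ≠ 1) ≠ [] := by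
      intro hnil
      have : w.takeWhile (· ≠ 1) = w := by
        have := List.takeWhile_append_dropWhile (p := (· ≠ 1)) (l := w)
        rw [hnil, List.append_nil] at this; exact this
      have h1 := List.mem_takeWhile_imp (l := w) (p := (· ≠ 1)) (this ▸ h)
      simp at h1
    have hhead : (w.dropWhile (· ≠ 1)).head hd = 1 := by
      have := List.head_dropWhile_not (p := (· ≠ 1)) (l := w) hd
      simpa using this
    have hct := List.cons_head_tail (l := w.dropWhile (· ≠ 1)) hd
    rw [hhead] at hct
    conv_lhs => rw [← List.takeWhile_append_dropWhile (p := (· ≠ 1)) (l := w)]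
    congr 1
    exact hct.symm

lemma decomp_last (h : (1:Fin 2) ∈ w) : ∃ v : List (Fin 2), ∃ k : ℕ,
    w = v ++ 1 :: List.replicate k 0 := by
  have hr : (1:Fin 2) ∈ w.reverse := by simpa using h
  obtain ⟨t, v, ht, hw⟩ := decomp_first hr
  refine ⟨v.reverse, t.length, ?_⟩
  have htrep : t.reverse = List.replicate t.length (0 : Fin 2) := by
    rw [List.eq_replicate_iff]
    constructor
    · simp
    · intro b hb
      exact fin2_eq_zero (fun h1 => ht (h1 ▸ (List.mem_reverse.mp hb)))
  have := congrArg List.reverse hw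
  rw [List.reverse_reverse] at this
  rw [this, List.reverse_append, List.reverse_cons, htrep]
  simp

lemma pop_push (w : List (Fin 2)) : popWord (pushWord w) = w := by
  by_cases h : (1:Fin 2) ∈ w
  · obtain ⟨v, k, rfl⟩ := decomp_last h
    have hrep : (1:Fin 2) ∉ List.replicate k (0:Fin 2) := by simp
    rw [push_append v _ hrep, pop_append _ _ hrep]
  · rw [pushWord, if_neg h, popWord, if_neg h]

lemma push_pop (w : List (Fin 2)) : pushWord (popWord w) = w := by
  by_cases h : (1:Fin 2) ∈ w
  · obtain ⟨t, v, ht, rfl⟩ := decomp_first h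
    rw [pop_append t v ht, push_append _ _ ht]
  · rw [popWord, if_neg h, pushWord, if_neg h]



end Lists

lemma XgDef : Xg = mono [0] := rfl
lemma YgDef : Yg = mono [1] := rfl

section Rel
variable (B A : Ass2)

lemma coeff_eq (hE : B * Yg + Xg * A - (A * Xg + Yg * B) = 0) (u : List (Fin 2)) :
    coeffW (B * Yg) u + coeffW (Xg * A) u - (coeffW (A * Xg) u + coeffW (Yg * B) u) = 0 := by
  have h := congrArg (fun f => coeffW f u) hE
  simpa [coeffW_add, coeffW_sub, coeffW_zero] using h

variable (hE : B * Yg + Xg * A - (A * Xg + Yg * B) = 0)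
include hE

lemma R1 (s : List (Fin 2)) : coeffW A (s ++ [0]) = coeffW A (0 :: s) := by
  have h := coeff_eq B A hE (0 :: (s ++ [0]))
  rw [XgDef, YgDef] at h
  have h1 : coeffW (B * mono [1]) (0 :: (s ++ [0])) = 0 := by
    apply mulR_apply_ne
    rw [show (0:Fin 2) :: (s ++ [0]) = (0 :: s) ++ [0] from rfl, List.getLast?_concat]
    simp
  have h2 : coeffW (mono [0] * A) (0 :: (s ++ [0])) = coeffW A (s ++ [0]) := mulL_apply 0 A _
  have h3 : coeffW (A * mono [0]) (0 :: (s ++ [0])) = coeffW A (0 :: s) := by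
    rw [show (0:Fin 2) :: (s ++ [0]) = (0 :: s) ++ [0] from rfl]
    exact mulR_apply A 0 _
  have h4 : coeffW (mono [1] * B) (0 :: (s ++ [0])) = 0 := by
    apply mulL_apply_ne
    simp
  rw [h1, h2, h3, h4] at h
  linarith

lemma R2 (t : List (Fin 2)) : coeffW B (t ++ [0]) = - coeffW A (1 :: t) := by
  have h := coeff_eq B A hE (1 :: (t ++ [0]))
  rw [XgDef, YgDef] at h
  have h1 : coeffW (B * mono [1]) (1 :: (t ++ [0])) = 0 := by
    apply mulR_apply_ne
    rw [show (1:Fin 2) :: (t ++ [0]) = (1 :: t) ++ [0] from rfl, List.getLast?_concat]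
    simp
  have h2 : coeffW (mono [0] * A) (1 :: (t ++ [0])) = 0 := by
    apply mulL_apply_ne
    simp
  have h3 : coeffW (A * mono [0]) (1 :: (t ++ [0])) = coeffW A (1 :: t) := by
    rw [show (1:Fin 2) :: (t ++ [0]) = (1 :: t) ++ [0] from rfl]
    exact mulR_apply A 0 _
  have h4 : coeffW (mono [1] * B) (1 :: (t ++ [0])) = coeffW B (t ++ [0]) := mulL_apply 1 B _
  rw [h1, h2, h3, h4] at h
  linarith

lemma R3 (u : List (Fin 2)) : coeffW A (u ++ [1]) = - coeffW B (0 :: u) := by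
  have h := coeff_eq B A hE (0 :: (u ++ [1]))
  rw [XgDef, YgDef] at h
  have h1 : coeffW (B * mono [1]) (0 :: (u ++ [1])) = coeffW B (0 :: u) := by
    rw [show (0:Fin 2) :: (u ++ [1]) = (0 :: u) ++ [1] from rfl]
    exact mulR_apply B 1 _
  have h2 : coeffW (mono [0] * A) (0 :: (u ++ [1])) = coeffW A (u ++ [1]) := mulL_apply 0 A _
  have h3 : coeffW (A * mono [0]) (0 :: (u ++ [1])) = 0 := by
    apply mulR_apply_ne
    rw [show (0:Fin 2) :: (u ++ [1]) = (0 :: u) ++ [1] from rfl, List.getLast?_concat]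
    simp
  have h4 : coeffW (mono [1] * B) (0 :: (u ++ [1])) = 0 := by
    apply mulL_apply_ne
    simp
  rw [h1, h2, h3, h4] at h
  linarith

lemma R4 (v : List (Fin 2)) : coeffW B (1 :: v) = coeffW B (v ++ [1]) := by
  have h := coeff_eq B A hE (1 :: (v ++ [1]))
  rw [XgDef, YgDef] at h
  have h1 : coeffW (B * mono [1]) (1 :: (v ++ [1])) = coeffW B (1 :: v) := by
    rw [show (1:Fin 2) :: (v ++ [1]) = (1 :: v) ++ [1] from rfl]
    exact mulR_apply B 1 _
  have h2 : coeffW (mono [0] * A) (1 :: (v ++ [1])) = 0 := by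
    apply mulL_apply_ne
    simp
  have h3 : coeffW (A * mono [0]) (1 :: (v ++ [1])) = 0 := by
    apply mulR_apply_ne
    rw [show (1:Fin 2) :: (v ++ [1]) = (1 :: v) ++ [1] from rfl, List.getLast?_concat]
    simp
  have h4 : coeffW (mono [1] * B) (1 :: (v ++ [1])) = coeffW B (v ++ [1]) := mulL_apply 1 B _
  rw [h1, h2, h3, h4] at h
  linarith

lemma Arot (k : ℕ) : ∀ s : List (Fin 2),
    coeffW A (s ++ List.replicate k 0) = coeffW A (List.replicate k 0 ++ s) := by
  induction k with
  | zero => intro s; simp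
  | succ k ih =>
      intro s
      have e1 : s ++ List.replicate (k+1) (0:Fin 2) = (s ++ [0]) ++ List.replicate k 0 := by
        simp [List.replicate_succ]
      rw [e1, ih (s ++ [0])]
      have e3 : List.replicate k (0:Fin 2) ++ (s ++ [0]) = (List.replicate k 0 ++ s) ++ [0] := by
        simp
      rw [e3, R1 B A hE]
      have e4 : (0:Fin 2) :: (List.replicate k 0 ++ s) = List.replicate (k+1) 0 ++ s := by
        simp [List.replicate_succ]
      rw [e4]

lemma chain (k : ℕ) (v : List (Fin 2)) :
    coeffW B (v ++ 1 :: List.replicate k 0) = coeffW B (List.replicate k 0 ++ 1 :: v) := by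
  cases k with
  | zero => simpa using (R4 B A hE v).symm
  | succ k =>
      have e1 : v ++ 1 :: List.replicate (k+1) (0:Fin 2)
          = ((v ++ [1]) ++ List.replicate k 0) ++ [0] := by
        simp [List.replicate_succ']
      rw [e1, R2 B A hE]
      have e2 : (1:Fin 2) :: ((v ++ [1]) ++ List.replicate k 0)
          = ((1 :: v) ++ [1]) ++ List.replicate k 0 := by simp
      rw [e2, Arot B A hE k ((1 :: v) ++ [1])]
      have e3 : List.replicate k (0:Fin 2) ++ ((1 :: v) ++ [1])
          = (List.replicate k 0 ++ 1 :: v) ++ [1] := by simp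
      rw [e3, R3 B A hE, neg_neg]
      have e4 : (0:Fin 2) :: (List.replicate k 0 ++ 1 :: v)
          = List.replicate (k+1) 0 ++ 1 :: v := by
        rw [List.replicate_succ]; rfl
      rw [e4]

lemma push_coeff (w : List (Fin 2)) : coeffW B (pushWord w) = coeffW B w := by
  by_cases h : (1:Fin 2) ∈ w
  · obtain ⟨v, k, rfl⟩ := decomp_last h
    rw [push_append v _ (by simp)]
    exact (chain B A hE k v).symm
  · rw [pushWord, if_neg h]

end Rel

def pushE : FreeMonoid (Fin 2) ≃ FreeMonoid (Fin 2) where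
  toFun w := FreeMonoid.ofList (pushWord (FreeMonoid.toList w))
  invFun w := FreeMonoid.ofList (popWord (FreeMonoid.toList w))
  left_inv w := by
    show FreeMonoid.ofList (popWord (pushWord (FreeMonoid.toList w))) = w
    rw [pop_push]
    rfl
  right_inv w := by
    show FreeMonoid.ofList (pushWord (popWord (FreeMonoid.toList w))) = w
    rw [push_pop]
    rfl

lemma pushA_fix (B : Ass2) (h : ∀ w, coeffW B (pushWord w) = coeffW B w) :
    MonoidAlgebra.ofCoeff (Finsupp.mapDomain (fun w => FreeMonoid.ofList (pushWord (FreeMonoid.toList w)))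
      B.coeff) = B := by
  have hfn : (fun w => FreeMonoid.ofList (pushWord (FreeMonoid.toList w))) = ⇑pushE := rfl
  rw [hfn]
  ext v
  rw [MonoidAlgebra.coeff_ofCoeff, Finsupp.mapDomain_equiv_apply]
  have h2 := h (FreeMonoid.toList (pushE.symm v))
  have h3 : FreeMonoid.ofList (pushWord (FreeMonoid.toList (pushE.symm v)))
      = pushE (pushE.symm v) := rfl
  unfold coeffW at h2
  rw [h3, Equiv.apply_symm_apply, FreeMonoid.ofList_toList] at h2
  exact h2.symm


lemma der_sub (vx vy f g : Ass2) : der vx vy (f - g) = der vx vy f - der vx vy g := by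
  simp [der_eq, map_sub]

lemma der_XY (B A : Ass2) : der B A ⁅Xg, Yg⁆ = B * Yg + Xg * A - (A * Xg + Yg * B) := by
  rw [Ring.lie_def, der_sub, der_mul, der_mul, der_Xg, der_Yg]

end Aux

/-- **Statement 9** (Corollary 14 of the paper).  If `b, b′ ∈ lie_C` are push-invariant with
partners `a, a′` (so `D_{b,a}` and `D_{b′,a′}` annihilate `[x,y]`), then the commutator
`[D_{b,a}, D_{b′,a′}]` equals `D_{b″,a″}` with `b″ = D_{b,a}(b′) − D_{b′,a′}(b)` and
`a″ = D_{b,a}(a′) − D_{b′,a′}(a)`, and it annihilates `[x,y]`; in particular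
`⟨b,b′⟩ = b″` is again a push-invariant element of `lie_C` with partner `a″`.  Hence the
push-invariant elements of `lie_C` form a Lie algebra under `⟨·,·⟩`, isomorphic to `oder_2`. -/
theorem pushInvariant_lie_algebra (b b' a a' : Ass2)
    (hb : b ∈ lieC) (hb' : b' ∈ lieC) (ha : a ∈ lieC) (ha' : a' ∈ lieC)
    (hpb : pushA b = b) (hpb' : pushA b' = b')
    (hD : der b a ⁅Xg, Yg⁆ = 0) (hD' : der b' a' ⁅Xg, Yg⁆ = 0) :
    (∀ f : Ass2, der b a (der b' a' f) - der b' a' (der b a f)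
        = der (der b a b' - der b' a' b) (der b a a' - der b' a' a) f) ∧
    der (der b a b' - der b' a' b) (der b a a' - der b' a' a) ⁅Xg, Yg⁆ = 0 ∧
    (der b a b' - der b' a' b) ∈ lieC ∧
    pushA (der b a b' - der b' a' b) = der b a b' - der b' a' b ∧
    (der b a a' - der b' a' a) ∈ lieC := by
  set b'' := der b a b' - der b' a' b with hbdef
  set a'' := der b a a' - der b' a' a with hadef
  have part1 : ∀ f : Ass2, der b a (der b' a' f) - der b' a' (der b a f) = der b'' a'' f :=
    fun f => der_comm b a b' a' f
  have part2 : der b'' a'' ⁅Xg, Yg⁆ = 0 := by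
    have h1 := part1 ⁅Xg, Yg⁆
    rw [hD, hD', der_zero, der_zero, sub_zero] at h1
    exact h1.symm
  have hE : b'' * Yg + Xg * a'' - (a'' * Xg + Yg * b'') = 0 := by
    rw [← der_XY]; exact part2
  refine ⟨part1, part2, ?_, ?_, ?_⟩
  · exact sub_mem (der_mem_lieC hb ha hb') (der_mem_lieC hb' ha' hb)
  · exact pushA_fix b'' (fun w => push_coeff b'' a'' hE w)
  · exact sub_mem (der_mem_lieC hb ha ha') (der_mem_lieC hb' ha' ha)
end

section
/- Work in ℚ[v_1,…,v_r] with r ≥ 2, and set v_0 := v_r. For a subset B ⊆ {1,…,r} let P^d_B denote the sum of all monomials of degree d in the variables {v_j : j ∈ B} (with P^0_B = 1 and P^d_B = 0 for d < 0). Then for all 1 ≤ i ≤ r−1 and all n ≥ 1: Σ_{∅ ≠ B ⊆ {1,…,i}} (−1)^{|B|−1} (∏_{j ∈ B} (v_{j−1} − v_j)) · P^{n−|B|}_B = (v_r − v_i) · v_i^{n−1}. -/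
noncomputable section

open MvPolynomial

/-- the variables `v_1, …, v_r` (for `1 ≤ j ≤ r`), with the convention `v_0 = v_r`. -/
def vv (r j : ℕ) : MP r :=
  if h : 0 < r then
    (if j = 0 then X ⟨r - 1, Nat.sub_lt h one_pos⟩
     else X ⟨(j - 1) % r, Nat.mod_lt _ h⟩)
  else 0

/-- `P^d_B` : the sum of all monomials of degree `d` in the variables `{v_j : j ∈ B}`,
with `P^0_B = 1` and `P^d_B = 0` for `d < 0`. -/
def PZ (r : ℕ) (d : ℤ) (B : Finset ℕ) : MP r :=
  if d < 0 then 0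
  else ∑ s ∈ Finset.sym B d.toNat, ((s : Multiset ℕ).map (vv r)).prod

lemma PZ_neg {r : ℕ} {d : ℤ} (h : d < 0) (B : Finset ℕ) : PZ r d B = 0 := by
  simp [PZ, h]

lemma PZ_zero (r : ℕ) (B : Finset ℕ) : PZ r 0 B = 1 := by
  rw [PZ, if_neg (by omega)]
  simp only [Int.toNat_zero, Finset.sym_zero, Finset.sum_singleton]
  rfl

lemma PZ_empty (r : ℕ) (n : ℕ) : PZ r ((n : ℤ) + 1) ∅ = 0 := by
  have h : ((n : ℤ) + 1).toNat = n + 1 := by omega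
  rw [PZ, if_neg (by omega), h, Finset.sym_empty, Finset.sum_empty]

lemma vv_zero (r : ℕ) : vv r 0 = vv r r := by
  unfold vv
  rcases Nat.eq_zero_or_pos r with h | h
  · simp [h]
  · have : r ≠ 0 := by omega
    simp [h, this, Nat.mod_eq_of_lt (Nat.sub_lt h one_pos)]

lemma sym_insert_sum (r : ℕ) {a : ℕ} {B : Finset ℕ} (ha : a ∉ B) (d : ℕ) :
    ∑ s ∈ (insert a B).sym (d+1), ((s : Multiset ℕ).map (vv r)).prod
    = ∑ s ∈ B.sym (d+1), ((s : Multiset ℕ).map (vv r)).prod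
      + vv r a * ∑ s ∈ (insert a B).sym d, ((s : Multiset ℕ).map (vv r)).prod := by
  classical
  rw [← Finset.sum_filter_add_sum_filter_not ((insert a B).sym (d+1)) (a ∈ ·)]
  rw [add_comm]
  congr 1
  · congr 1
    ext s
    simp only [Finset.mem_filter, Finset.mem_sym_iff, Finset.mem_insert]
    constructor
    · rintro ⟨h1, h2⟩ x hx
      rcases h1 x hx with h | h
      · exact absurd (h ▸ hx) h2
      · exact h
    · intro h
      exact ⟨fun x hx => Or.inr (h x hx), fun hmem => ha (h a hmem)⟩
  · rw [Finset.mul_sum]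
    refine Finset.sum_bij' (fun s hs => s.erase a (Finset.mem_filter.mp hs).2)
      (fun s _ => a ::ₛ s) ?hi ?hj ?li ?ri ?h
    case hi =>
      intro s hs
      have hs' := Finset.mem_filter.mp hs
      simp only [Finset.mem_sym_iff] at hs' ⊢
      intro x hx
      rw [← Sym.mem_coe, Sym.coe_erase] at hx
      exact hs'.1 x (Sym.mem_coe.mp (Multiset.mem_of_mem_erase hx))
    case hj =>
      intro s hs
      simp only [Finset.mem_filter, Finset.mem_sym_iff] at hs ⊢
      refine ⟨fun x hx => ?_, Sym.mem_cons_self a s⟩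
      rcases Sym.mem_cons.mp hx with h | h
      · simp [h]
      · exact hs x h
    case li =>
      intro s hs
      exact Sym.cons_erase _
    case ri =>
      intro s hs
      exact Sym.erase_cons_head s a
    case h =>
      intro s hs
      have h := (Finset.mem_filter.mp hs).2
      conv_lhs => rw [← Sym.cons_erase h]
      rw [Sym.coe_cons, Multiset.map_cons, Multiset.prod_cons]

lemma PZ_insert (r : ℕ) {a : ℕ} {B : Finset ℕ} (ha : a ∉ B) (d : ℤ) :
    PZ r d (insert a B) = PZ r d B + vv r a * PZ r (d-1) (insert a B) := by
  rcases lt_trichotomy d 0 with h | h | h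
  · rw [PZ_neg h, PZ_neg h, PZ_neg (by omega)]
    ring
  · subst h
    rw [PZ_zero, PZ_zero, PZ_neg (by omega)]
    ring
  · obtain ⟨n, rfl⟩ : ∃ n : ℕ, d = (n : ℤ) + 1 := ⟨(d-1).toNat, by omega⟩
    have h1 : ((n : ℤ) + 1).toNat = n + 1 := by omega
    have h2 : ((n : ℤ) + 1 - 1).toNat = n := by omega
    rw [PZ, PZ, PZ, if_neg (by omega), if_neg (by omega), if_neg (by omega), h1, h2]
    exact sym_insert_sum r ha n

lemma PZ_singleton (r a : ℕ) (n : ℕ) : PZ r (n : ℤ) {a} = vv r a ^ n := by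
  induction n with
  | zero => exact PZ_zero r _
  | succ n ih =>
    have : ({a} : Finset ℕ) = insert a ∅ := rfl
    rw [this, PZ_insert r (Finset.notMem_empty a), ← this]
    have e1 : ((n : ℤ) + 1) - 1 = (n : ℤ) := by ring
    have e2 : ((n + 1 : ℕ) : ℤ) = (n : ℤ) + 1 := by push_cast; ring
    rw [e2, e1, ih, PZ_empty]
    ring

def Sp (r i : ℕ) (n : ℤ) : MP r :=
  ∑ B ∈ (Finset.Icc 1 i).powerset,
    (-1 : MP r) ^ B.card * (∏ j ∈ B, (vv r (j - 1) - vv r j)) * PZ r (n - B.card) B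

def TT (r i : ℕ) (m : ℤ) : MP r :=
  ∑ B ∈ (Finset.Icc 1 i).powerset,
    (-1 : MP r) ^ B.card * (∏ j ∈ B, (vv r (j - 1) - vv r j)) *
      PZ r (m - B.card) (insert (i+1) B)

lemma notMem_of_subset_Icc {i : ℕ} {B : Finset ℕ} (hB : B ∈ (Finset.Icc 1 i).powerset) :
    i + 1 ∉ B := by
  intro h
  have := Finset.mem_powerset.mp hB h
  simp only [Finset.mem_Icc] at this
  omega

lemma TT_neg (r i : ℕ) {m : ℤ} (hm : m < 0) : TT r i m = 0 := by
  apply Finset.sum_eq_zero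
  intro B _
  rw [PZ_neg (by have := B.card; omega)]
  ring

lemma TT_rec (r i : ℕ) (m : ℤ) :
    TT r i m = Sp r i m + vv r (i+1) * TT r i (m-1) := by
  unfold TT Sp
  rw [Finset.mul_sum, ← Finset.sum_add_distrib]
  apply Finset.sum_congr rfl
  intro B hB
  rw [PZ_insert r (notMem_of_subset_Icc hB)]
  have : m - (B.card : ℤ) - 1 = (m - 1) - B.card := by ring
  rw [this]
  ring

lemma Sp_zero (r i : ℕ) : Sp r i 0 = 1 := by
  unfold Sp
  rw [Finset.sum_eq_single ∅]
  · simp [PZ_zero]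
  · intro B hB hne
    have : B.card ≠ 0 := by simpa [Finset.card_eq_zero] using hne
    rw [PZ_neg (by omega)]
    ring
  · intro h
    exact absurd (Finset.empty_mem_powerset _) h

lemma Sp_succ (r i : ℕ) (n : ℤ) :
    Sp r (i+1) n = Sp r i n - (vv r i - vv r (i+1)) * TT r i (n-1) := by
  unfold Sp TT
  have hicc : Finset.Icc 1 (i+1) = insert (i+1) (Finset.Icc 1 i) := by
    ext x
    simp only [Finset.mem_Icc, Finset.mem_insert]
    omega
  have hnotmem : i + 1 ∉ Finset.Icc 1 i := by simp
  rw [hicc, Finset.sum_powerset_insert hnotmem, Finset.mul_sum, ← Finset.sum_sub_distrib,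
    ← Finset.sum_add_distrib]
  apply Finset.sum_congr rfl
  intro B hB
  have hmem : i + 1 ∉ B := notMem_of_subset_Icc hB
  rw [Finset.card_insert_of_notMem hmem, Finset.prod_insert hmem]
  have e1 : (i + 1) - 1 = i := by omega
  have e2 : n - ((B.card + 1 : ℕ) : ℤ) = (n - 1) - B.card := by push_cast; ring
  rw [e1, e2, pow_succ]
  ring

lemma pair_ne (i : ℕ) : i + 1 ∉ ({i} : Finset ℕ) := by simp

lemma pair_geom (r i : ℕ) (d : ℕ) :
    (vv r i - vv r (i+1)) * PZ r (d : ℤ) (insert (i+1) {i})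
      = vv r i ^ (d+1) - vv r (i+1) ^ (d+1) := by
  induction d with
  | zero =>
    rw [Nat.cast_zero, PZ_zero]
    ring
  | succ d ih =>
    have h := PZ_insert r (pair_ne i) ((d : ℤ) + 1)
    have e : ((d : ℤ) + 1) - 1 = (d : ℤ) := by ring
    rw [e] at h
    have hx : PZ r ((d:ℤ)+1) {i} = vv r i ^ (d+1) := by
      rw [show ((d:ℤ)+1) = ((d+1:ℕ):ℤ) by push_cast; ring, PZ_singleton]
    rw [hx] at h
    have e2 : (((d+1 : ℕ)) : ℤ) = (d : ℤ) + 1 := by push_cast; ring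
    rw [e2, h]
    have hs : vv r i ^ (d + 1 + 1) = vv r i * vv r i ^ (d+1) := by ring
    linear_combination vv r (i+1) * ih

lemma TT_eval (r i : ℕ)
    (hA : ∀ n : ℕ, Sp r i ((n : ℤ) + 1) = -(vv r r - vv r i) * vv r i ^ n) (m : ℕ) :
    TT r i (m : ℤ) = vv r (i+1) ^ m
      - (vv r r - vv r i) * PZ r ((m : ℤ) - 1) (insert (i+1) {i}) := by
  induction m with
  | zero =>
    rw [Nat.cast_zero, TT_rec, Sp_zero, TT_neg r i (by omega), PZ_neg (by omega)]
    ring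
  | succ m ih =>
    have e2 : (((m+1 : ℕ)) : ℤ) = (m : ℤ) + 1 := by push_cast; ring
    have e3 : ((m : ℤ) + 1) - 1 = (m : ℤ) := by ring
    rw [e2, TT_rec, e3, ih]
    have hSp := hA m
    have hP := PZ_insert r (pair_ne i) (m : ℤ)
    rw [PZ_singleton] at hP
    rw [hSp, hP]
    ring

lemma Sp_eval (r i : ℕ) (n : ℕ) :
    Sp r i ((n : ℤ) + 1) = -(vv r r - vv r i) * vv r i ^ n := by
  induction i generalizing n with
  | zero =>
    unfold Sp
    rw [show Finset.Icc 1 0 = (∅ : Finset ℕ) by simp, Finset.powerset_empty,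
      Finset.sum_singleton]
    simp only [Finset.card_empty, pow_zero, Finset.prod_empty, Nat.cast_zero, sub_zero,
      one_mul, mul_one]
    rw [PZ_empty, ← vv_zero]
    ring
  | succ i ih =>
    have e3 : ((n : ℤ) + 1) - 1 = (n : ℤ) := by ring
    rw [Sp_succ, e3, TT_eval r i ih n, ih n]
    cases n with
    | zero =>
      rw [PZ_neg (by omega)]
      ring
    | succ d =>
      have pg := pair_geom r i d
      have e4 : (((d+1:ℕ)):ℤ) - 1 = (d : ℤ) := by push_cast; ring
      rw [e4]
      linear_combination (vv r r - vv r i) * pg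

/-- **Statement 18** (equation (70), Claim 2 in Appendix 2 of the paper).  In
`ℚ[v_1,…,v_r]` with `r ≥ 2` and `v_0 = v_r`, for all `1 ≤ i ≤ r−1` and `n ≥ 1`:
`Σ_{∅ ≠ B ⊆ {1,…,i}} (−1)^{|B|−1} (∏_{j∈B}(v_{j−1}−v_j)) · P^{n−|B|}_B
  = (v_r − v_i)·v_i^{n−1}`. -/
theorem complete_homogeneous_alternating_identity (r : ℕ) (hr : 2 ≤ r)
    (i n : ℕ) (hi1 : 1 ≤ i) (hir : i ≤ r - 1) (hn : 1 ≤ n) :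
    ∑ B ∈ (Finset.Icc 1 i).powerset.filter (· ≠ ∅),
      ((-1 : MP r)) ^ (B.card - 1) * (∏ j ∈ B, (vv r (j - 1) - vv r j)) *
        PZ r ((n : ℤ) - B.card) B
      = (vv r r - vv r i) * (vv r i) ^ (n - 1) := by
  classical
  obtain ⟨m, rfl⟩ : ∃ m, n = m + 1 := ⟨n - 1, by omega⟩
  have hcast : ((m + 1 : ℕ) : ℤ) = (m : ℤ) + 1 := by push_cast; ring
  set f : Finset ℕ → MP r := fun B =>
    (-1 : MP r) ^ B.card * (∏ j ∈ B, (vv r (j - 1) - vv r j)) *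
      PZ r (((m + 1 : ℕ) : ℤ) - B.card) B with hf
  have hfilter : (Finset.Icc 1 i).powerset.filter (· ≠ ∅)
      = ((Finset.Icc 1 i).powerset).erase ∅ := Finset.filter_ne' _ _
  rw [hfilter]
  have h1 : ∀ B ∈ ((Finset.Icc 1 i).powerset).erase ∅,
      (-1 : MP r) ^ (B.card - 1) * (∏ j ∈ B, (vv r (j - 1) - vv r j)) *
        PZ r (((m + 1 : ℕ) : ℤ) - B.card) B = - f B := by
    intro B hB
    have hne : B ≠ ∅ := (Finset.mem_erase.mp hB).1
    obtain ⟨c, hc⟩ : ∃ c, B.card = c + 1 :=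
      ⟨B.card - 1, by
        have := Finset.card_pos.mpr (Finset.nonempty_iff_ne_empty.mpr hne); omega⟩
    rw [hf]
    simp only [hc, Nat.add_sub_cancel, pow_succ]
    ring
  rw [Finset.sum_congr rfl h1, Finset.sum_neg_distrib]
  have h3 := Finset.sum_erase_add ((Finset.Icc 1 i).powerset) f
    (Finset.empty_mem_powerset (Finset.Icc 1 i))
  have hfempty : f ∅ = 0 := by
    rw [hf]
    simp only [Finset.card_empty, pow_zero, Finset.prod_empty, Nat.cast_zero, sub_zero,
      one_mul, mul_one]
    rw [hcast, PZ_empty]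
  have hsum : ∑ B ∈ ((Finset.Icc 1 i).powerset).erase ∅, f B = Sp r i ((m + 1 : ℕ) : ℤ) := by
    have hSpf : Sp r i ((m + 1 : ℕ) : ℤ) = ∑ B ∈ (Finset.Icc 1 i).powerset, f B := rfl
    rw [hSpf, ← h3, hfempty, add_zero]
  rw [hsum, hcast, Sp_eval r i m]
  simp only [Nat.add_sub_cancel]
  ring
end
end
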